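/- φₙ is a filtered map from the skeletally filtered n-cube to the skeletally filtered n-globe: for every n ≥ 1, every k with 0 ≤ k < n, and every x ∈ Iⁿ such that |xᵢ| = 1 for at least n − k indices i, one has ‖φₙ(x)‖ = 1 and the j-th coordinate of φₙ(x) is 0 for every j ≤ n − k − 1; that is, φₙ(x) lies in the k-skeleton of the n-globe. -/

import Mathlib

/-- The comparison map φₙ : Iⁿ → Gⁿ, defined recursively by φ₁(x₁) = x₁ and
    φₙ(t, y) = (t·√(1 − ‖φₙ₋₁(y)‖²), φₙ₋₁(y)). -/
noncomputable def phi : (n : ℕ) → EuclideanSpace ℝ (Fin n) → EuclideanSpace ℝ (Fin n)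
  | 0, x => x
  | n + 1, x =>
    WithLp.toLp 2 (Fin.cons (x 0 * Real.sqrt (1 - ‖phi n (WithLp.toLp 2 fun i => x i.succ)‖ ^ 2))
        (phi n (WithLp.toLp 2 fun i => x i.succ)) : Fin (n + 1) → ℝ)

/-- The n-cube Iⁿ = [−1,1]ⁿ, inside Euclidean n-space. -/
def cube (n : ℕ) : Set (EuclideanSpace ℝ (Fin n)) := {x | ∀ i, |x i| ≤ 1}

/-- The n-disk Dⁿ = {x : ‖x‖ ≤ 1}, the underlying space of the n-globe Gⁿ. -/
def disk (n : ℕ) : Set (EuclideanSpace ℝ (Fin n)) := {x | ‖x‖ ≤ 1}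

lemma normsq_eq (m : ℕ) (z : EuclideanSpace ℝ (Fin m)) : ‖z‖ ^ 2 = ∑ i, (z i) ^ 2 := by
  rw [EuclideanSpace.norm_eq, Real.sq_sqrt (Finset.sum_nonneg fun i _ => sq_nonneg _)]
  simp [Real.norm_eq_abs, sq_abs]

lemma phi_succ_zero (n : ℕ) (x : EuclideanSpace ℝ (Fin (n+1))) :
    phi (n+1) x 0 = x 0 * Real.sqrt (1 - ‖phi n (WithLp.toLp 2 fun i => x i.succ)‖ ^ 2) := by
  rw [phi]; simp

lemma phi_succ_succ (n : ℕ) (x : EuclideanSpace ℝ (Fin (n+1))) (i : Fin n) :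
    phi (n+1) x i.succ = phi n (WithLp.toLp 2 fun i => x i.succ) i := by
  rw [phi]; simp

lemma phi_succ_normsq (n : ℕ) (x : EuclideanSpace ℝ (Fin (n+1))) :
    ‖phi (n+1) x‖ ^ 2 =
      (x 0 * Real.sqrt (1 - ‖phi n (WithLp.toLp 2 fun i => x i.succ)‖ ^ 2)) ^ 2
        + ‖phi n (WithLp.toLp 2 fun i => x i.succ)‖ ^ 2 := by
  rw [normsq_eq (n+1) (phi (n+1) x), Fin.sum_univ_succ, phi_succ_zero,
    normsq_eq n (phi n (WithLp.toLp 2 fun i => x i.succ))]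
  simp [phi_succ_succ]

lemma phi_norm_le (n : ℕ) (x : EuclideanSpace ℝ (Fin n)) (hx : x ∈ cube n) :
    ‖phi n x‖ ≤ 1 := by
  induction n with
  | zero => simp [phi, EuclideanSpace.norm_eq]
  | succ n ih =>
    set y : EuclideanSpace ℝ (Fin n) := WithLp.toLp 2 fun i => x i.succ with hy
    have hyc : y ∈ cube n := fun i => hx i.succ
    have hyle := ih y hyc
    have hs : Real.sqrt (1 - ‖phi n y‖ ^ 2) ^ 2 = 1 - ‖phi n y‖ ^ 2 :=
      Real.sq_sqrt (by nlinarith [norm_nonneg (phi n y)])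
    have h2 : ‖phi (n+1) x‖ ^ 2 = (x 0) ^ 2 * (1 - ‖phi n y‖ ^ 2) + ‖phi n y‖ ^ 2 := by
      rw [phi_succ_normsq, mul_pow, hs]
    have hx0 : |x 0| ≤ 1 := hx 0
    have hx0sq : (x 0) ^ 2 ≤ 1 := by nlinarith [sq_abs (x 0), abs_nonneg (x 0)]
    nlinarith [norm_nonneg (phi (n+1) x), norm_nonneg (phi n y)]

lemma phi_norm_eq_one (n : ℕ) (x : EuclideanSpace ℝ (Fin n)) (hx : x ∈ cube n)
    (h : ∃ i, |x i| = 1) : ‖phi n x‖ = 1 := by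
  induction n with
  | zero => exact absurd h (by simp)
  | succ n ih =>
    set y : EuclideanSpace ℝ (Fin n) := WithLp.toLp 2 fun i => x i.succ with hy
    have hyc : y ∈ cube n := fun i => hx i.succ
    have hyle := phi_norm_le n y hyc
    have hs : Real.sqrt (1 - ‖phi n y‖ ^ 2) ^ 2 = 1 - ‖phi n y‖ ^ 2 :=
      Real.sq_sqrt (by nlinarith [norm_nonneg (phi n y)])
    have h2 : ‖phi (n+1) x‖ ^ 2 = (x 0) ^ 2 * (1 - ‖phi n y‖ ^ 2) + ‖phi n y‖ ^ 2 := by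
      rw [phi_succ_normsq, mul_pow, hs]
    have key : ‖phi (n+1) x‖ ^ 2 = 1 := by
      by_cases htail : ∃ i : Fin n, |y i| = 1
      · have := ih y hyc htail
        rw [h2, this]; ring
      · obtain ⟨i, hi⟩ := h
        have hi0 : i = 0 := by
          rcases Fin.eq_zero_or_eq_succ i with h0 | ⟨j, rfl⟩
          · exact h0
          · exact absurd ⟨j, hi⟩ htail
        rw [hi0] at hi
        have : (x 0) ^ 2 = 1 := by rw [← sq_abs, hi]; ring
        rw [h2, this]; ring
    nlinarith [norm_nonneg (phi (n+1) x)]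

lemma phi_vanish (n k : ℕ) (hk : k < n) (x : EuclideanSpace ℝ (Fin n)) (hx : x ∈ cube n)
    (hcard : n - k ≤ (Finset.univ.filter fun i : Fin n => |x i| = 1).card) :
    ∀ j : Fin n, (j : ℕ) < n - k - 1 → phi n x j = 0 := by
  induction n generalizing k with
  | zero => omega
  | succ n ih =>
    intro j hj
    by_cases hkn : n ≤ k
    · omega
    push_neg at hkn
    set y : EuclideanSpace ℝ (Fin n) := WithLp.toLp 2 fun i => x i.succ with hy
    have hyc : y ∈ cube n := fun i => hx i.succ
    -- tail card bound
    set S := Finset.univ.filter fun i : Fin (n+1) => |x i| = 1 with hS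
    set T := Finset.univ.filter fun i : Fin n => |y i| = 1 with hT
    have hsub : S.erase 0 ⊆ Finset.image Fin.succ T := by
      intro i hi
      rw [Finset.mem_erase] at hi
      obtain ⟨hne, hiS⟩ := hi
      rcases Fin.eq_zero_or_eq_succ i with h0 | ⟨j', rfl⟩
      · exact absurd h0 hne
      · refine Finset.mem_image.mpr ⟨j', ?_, rfl⟩
        rw [hT, Finset.mem_filter]
        exact ⟨Finset.mem_univ _, by simpa [hS, Finset.mem_filter] using hiS⟩
    have hTcard : n - k ≤ T.card := by
      have h1 : S.card - 1 ≤ (S.erase 0).card := by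
        by_cases h : (0 : Fin (n+1)) ∈ S
        · have := Finset.card_erase_of_mem h
          omega
        · rw [Finset.erase_eq_of_notMem h]
          omega
      have h2 := Finset.card_le_card hsub
      have h3 : (Finset.image Fin.succ T).card = T.card :=
        Finset.card_image_of_injective _ (Fin.succ_injective n)
      omega
    have IH := ih k hkn y hyc hTcard
    have hnormy : ‖phi n y‖ = 1 := by
      apply phi_norm_eq_one n y hyc
      have : 0 < T.card := by omega
      obtain ⟨i, hi⟩ := Finset.card_pos.mp this
      exact ⟨i, (Finset.mem_filter.mp hi).2⟩
    rcases Fin.eq_zero_or_eq_succ j with h0 | ⟨j', rfl⟩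
    · rw [h0, phi_succ_zero, hnormy]
      simp
    · rw [phi_succ_succ]
      apply IH
      have := Fin.val_succ j' ▸ hj
      omega

/-- `φₙ` is a filtered map for the skeletal filtrations. If `0 ≤ k < n` and
`x ∈ Iⁿ` has at least `n − k` coordinates of absolute value `1` (i.e. `x` lies in the
`k`-skeleton of the cube), then `‖φₙ(x)‖ = 1` and the first `n − k − 1` coordinates of
`φₙ(x)` vanish, i.e. `φₙ(x)` lies in the `k`-skeleton of the globe. -/
theorem phi_filtered (n k : ℕ) (hn : 1 ≤ n) (hk : k < n)
    (x : EuclideanSpace ℝ (Fin n)) (hx : x ∈ cube n)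
    (hcard : n - k ≤ (Finset.univ.filter fun i : Fin n => |x i| = 1).card) :
    ‖phi n x‖ = 1 ∧ ∀ j : Fin n, (j : ℕ) < n - k - 1 → phi n x j = 0 := by
  constructor
  · apply phi_norm_eq_one n x hx
    have : 0 < (Finset.univ.filter fun i : Fin n => |x i| = 1).card := by omega
    obtain ⟨i, hi⟩ := Finset.card_pos.mp this
    exact ⟨i, (Finset.mem_filter.mp hi).2⟩
  · exact phi_vanish n k hk x hx hcard
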